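/- Let c ≥ 7, S = ℚ[x_0, …, x_{c−1}] with indices read modulo c, q_i = x_i² − x_{i−1}x_{i−3}, and let L ⊆ S be the ideal generated by q_1, …, q_{c−1} together with all quadratic monomials x_i x_j of cyclic distance ≥ 3. Then for a linear form ℓ ∈ S₁, one has ℓ·q_0 ∈ L if and only if ℓ lies in the ℚ-span of x_2, x_3, …, x_{c−3}. (That is, the degree-1 part of the colon ideal (L : q_0) equals (x_2, …, x_{c−3})₁.) -/

import Mathlib

/-- The ring `ℚ[t,s]/(t³, s², st)` with basis `1, t, t², s`. -/
@[ext] structure AuxR : Type where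
  w : ℚ
  x : ℚ
  y : ℚ
  z : ℚ

namespace AuxR

instance : Zero AuxR := ⟨⟨0,0,0,0⟩⟩
instance : One AuxR := ⟨⟨1,0,0,0⟩⟩
instance : Add AuxR := ⟨fun a b => ⟨a.w+b.w, a.x+b.x, a.y+b.y, a.z+b.z⟩⟩
instance : Neg AuxR := ⟨fun a => ⟨-a.w, -a.x, -a.y, -a.z⟩⟩
instance : Mul AuxR := ⟨fun a b =>
  ⟨a.w*b.w, a.w*b.x + a.x*b.w, a.w*b.y + a.x*b.x + a.y*b.w, a.w*b.z + a.z*b.w⟩⟩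

@[simp] lemma zero_def : (0 : AuxR) = ⟨0,0,0,0⟩ := rfl
@[simp] lemma one_def : (1 : AuxR) = ⟨1,0,0,0⟩ := rfl
@[simp] lemma add_def (a b : AuxR) : a + b = ⟨a.w+b.w, a.x+b.x, a.y+b.y, a.z+b.z⟩ := rfl
@[simp] lemma neg_def (a : AuxR) : -a = ⟨-a.w, -a.x, -a.y, -a.z⟩ := rfl
@[simp] lemma mul_def (a b : AuxR) :
    a * b = ⟨a.w*b.w, a.w*b.x + a.x*b.w, a.w*b.y + a.x*b.x + a.y*b.w, a.w*b.z + a.z*b.w⟩ := rfl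

@[simp] lemma sub_def' (a b : AuxR) :
    a + -b = AuxR.mk (a.w - b.w) (a.x - b.x) (a.y - b.y) (a.z - b.z) := by
  ext <;> simp <;> ring

instance : CommRing AuxR where
  add_assoc a b c := by ext <;> simp <;> ring
  zero_add a := by ext <;> simp
  add_zero a := by ext <;> simp
  add_comm a b := by ext <;> simp <;> ring
  neg_add_cancel a := by ext <;> simp
  mul_assoc a b c := by ext <;> simp <;> ring
  one_mul a := by ext <;> simp
  mul_one a := by ext <;> simp
  left_distrib a b c := by ext <;> simp <;> ring
  right_distrib a b c := by ext <;> simp <;> ring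
  zero_mul a := by ext <;> simp
  mul_zero a := by ext <;> simp
  mul_comm a b := by ext <;> simp <;> ring
  nsmul := nsmulRec
  zsmul := zsmulRec

@[simp] lemma sub_def (a b : AuxR) :
    a - b = AuxR.mk (a.w - b.w) (a.x - b.x) (a.y - b.y) (a.z - b.z) := by
  rw [sub_eq_add_neg]; ext <;> simp <;> ring

@[simp] lemma pow_two_def (a : AuxR) : a ^ 2 = a * a := pow_two a

/-- The structure map `ℚ → AuxR`. -/
def fromQ : ℚ →+* AuxR where
  toFun q := ⟨q, 0, 0, 0⟩
  map_one' := rfl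
  map_mul' a b := by ext <;> simp
  map_zero' := rfl
  map_add' a b := by ext <;> simp

instance : Algebra ℚ AuxR := fromQ.toAlgebra

@[simp] lemma algebraMap_def (q : ℚ) : algebraMap ℚ AuxR q = ⟨q, 0, 0, 0⟩ := rfl

end AuxR

section ZModHelpers

variable {c : ℕ} [NeZero c]

lemma cast_wrap (a b : ℕ) (hb : b ≤ c + a) :
    ((a : ZMod c) - (b : ZMod c)) = ((c + a - b : ℕ) : ZMod c) := by
  have : ((c + a - b : ℕ) : ZMod c) = ((c : ℕ) : ZMod c) + a - b := by
    push_cast [Nat.cast_sub hb]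
    ring
  rw [this, ZMod.natCast_self, zero_add]

lemma cast_sub_small (a b : ℕ) (hb : b ≤ a) :
    ((a : ZMod c) - (b : ZMod c)) = ((a - b : ℕ) : ZMod c) := by
  rw [Nat.cast_sub hb]

lemma sub_val_eq (i j : ZMod c) : (i - j).val = (i.val + c - j.val) % c := by
  have hj : j.val ≤ c + i.val := le_of_lt (lt_of_lt_of_le (ZMod.val_lt j) (Nat.le_add_right _ _))
  have h1 : i - j = ((c + i.val - j.val : ℕ) : ZMod c) := by
    conv_lhs => rw [← ZMod.natCast_zmod_val i, ← ZMod.natCast_zmod_val j]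
    exact cast_wrap i.val j.val hj
  rw [h1, ZMod.val_natCast]
  congr 1
  omega

lemma mod_helper (a : ℕ) (h : a < c) : (c + a) % c = a := by
  rw [Nat.add_mod_left]; exact Nat.mod_eq_of_lt h

lemma dist_facts {m n : ℕ} (hm : m < c) (hn : n < c)
    (h1 : 3 ≤ (m + c - n) % c) (h2 : 3 ≤ (n + c - m) % c) :
    (m + 3 ≤ n ∨ n + 3 ≤ m) ∧ m + 3 ≤ n + c ∧ n + 3 ≤ m + c := by
  rcases Nat.lt_trichotomy m n with h | rfl | h
  · have e1 : (m + c - n) % c = m + c - n := Nat.mod_eq_of_lt (by omega)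
    have e2 : (n + c - m) % c = n - m := by
      rw [show n + c - m = c + (n - m) by omega, mod_helper _ (by omega)]
    omega
  · have e1 : (m + c - m) % c = 0 := by
      rw [show m + c - m = c by omega, Nat.mod_self]
    omega
  · have e1 : (m + c - n) % c = m - n := by
      rw [show m + c - n = c + (m - n) by omega, mod_helper _ (by omega)]
    have e2 : (n + c - m) % c = n + c - m := Nat.mod_eq_of_lt (by omega)
    omega

lemma cast_ne_cast {a b : ℕ} (ha : a < c) (hb : b < c) (h : a ≠ b) :
    (a : ZMod c) ≠ (b : ZMod c) := by
  intro he
  apply h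
  have := congrArg ZMod.val he
  rwa [ZMod.val_cast_of_lt ha, ZMod.val_cast_of_lt hb] at this

lemma val_cast_sub (m n : ℕ) (hm : m < c) (hn : n < c) :
    ((m : ZMod c) - (n : ZMod c)).val = (m + c - n) % c := by
  rw [sub_val_eq, ZMod.val_cast_of_lt hm, ZMod.val_cast_of_lt hn]

end ZModHelpers

open MvPolynomial

lemma degree_one_eq_single {σ : Type*} [DecidableEq σ] (d : σ →₀ ℕ)
    (hd0 : Finsupp.weight (1 : σ → ℕ) d = 1) :
    ∃ i, d = Finsupp.single i 1 := by
  have hd : (d.sum fun _ e => e) = 1 := by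
    have hd0' : Finsupp.degree d = 1 := by rw [Finsupp.degree_eq_weight_one]; exact hd0
    simpa [Finsupp.degree_apply, Finsupp.sum] using hd0'
  have hne : d.support.Nonempty := by
    by_contra h
    rw [Finset.not_nonempty_iff_eq_empty] at h
    rw [Finsupp.sum, h, Finset.sum_empty] at hd
    exact one_ne_zero hd.symm
  obtain ⟨i, hi⟩ := hne
  refine ⟨i, ?_⟩
  have hdi : d i = 1 := by
    have h1 : d i ≤ d.sum fun _ e => e := by
      rw [Finsupp.sum]
      exact Finset.single_le_sum (fun j _ => Nat.zero_le _) hi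
    have h2 : 1 ≤ d i := Nat.one_le_iff_ne_zero.2 (Finsupp.mem_support_iff.1 hi)
    omega
  ext j
  rcases eq_or_ne j i with rfl | hj
  · simp [hdi]
  · rw [Finsupp.single_eq_of_ne hj]
    by_contra h
    have hjs : j ∈ d.support := Finsupp.mem_support_iff.2 h
    have : d i + d j ≤ d.sum fun _ e => e := by
      rw [Finsupp.sum, ← Finset.sum_pair (a := i) (b := j) (Ne.symm hj)]
      apply Finset.sum_le_sum_of_subset
      intro k hk
      simp only [Finset.mem_insert, Finset.mem_singleton] at hk
      rcases hk with rfl | rfl <;> assumption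
    omega

lemma homog_one_decomp {σ : Type*} [Fintype σ] [DecidableEq σ]
    (p : MvPolynomial σ ℚ) (hp : p ∈ homogeneousSubmodule σ ℚ 1) :
    p = ∑ i : σ, C (coeff (Finsupp.single i 1) p) * X i := by
  rw [mem_homogeneousSubmodule] at hp
  apply MvPolynomial.ext
  intro d
  rw [coeff_sum]
  simp only [coeff_C_mul, coeff_X']
  by_cases hd : ∃ i, d = Finsupp.single i 1
  · obtain ⟨k, rfl⟩ := hd
    rw [Finset.sum_eq_single k]
    · simp
    · intro j _ hj
      rw [if_neg, mul_zero]
      exact fun h => hj (by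
        have := Finsupp.single_left_injective (α := σ) (one_ne_zero (α := ℕ))
        exact this h)
    · simp
  · have h0 : coeff d p = 0 := by
      by_contra h
      exact hd (degree_one_eq_single d (hp h))
    rw [h0]
    symm
    apply Finset.sum_eq_zero
    intro j _
    rw [if_neg, mul_zero]
    exact fun h => hd ⟨j, h.symm⟩

open MvPolynomial

/-- The binomial quadric `q_i = x_i² − x_{i−1} x_{i−3}` (indices modulo `c`). -/
noncomputable def binQuadric (c : ℕ) [NeZero c] (i : ZMod c) : MvPolynomial (ZMod c) ℚ :=
  X i ^ 2 - X (i - 1) * X (i - 3)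

/-- The ideal `L` generated by `q_1, …, q_{c−1}` together with all quadratic monomials
`x_i x_j` of cyclic distance `≥ 3`. -/
noncomputable def colonSourceIdeal (c : ℕ) [NeZero c] : Ideal (MvPolynomial (ZMod c) ℚ) :=
  Ideal.span
    ({p | ∃ i : ZMod c, i ≠ 0 ∧ p = binQuadric c i} ∪
     {p | ∃ i j : ZMod c, 3 ≤ (i - j).val ∧ 3 ≤ (j - i).val ∧ p = X i * X j})

open MvPolynomial

/-- The evaluation point used to detect forbidden coefficients. -/
noncomputable def vmap (c : ℕ) [NeZero c] (i : ZMod c) : AuxR :=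
  if i.val = 0 then 1
  else if i.val = 1 then ⟨0,1,0,0⟩
  else if i.val = c - 2 then ⟨0,0,1,0⟩
  else if i.val = c - 1 then ⟨0,0,0,1⟩
  else 0

section Ker

variable {c : ℕ} [NeZero c] (hc : 7 ≤ c)

lemma vmap_cast (n : ℕ) (hn : n < c) :
    vmap c ((n : ℕ) : ZMod c) =
      (if n = 0 then 1
       else if n = 1 then ⟨0,1,0,0⟩
       else if n = c - 2 then ⟨0,0,1,0⟩
       else if n = c - 1 then ⟨0,0,0,1⟩
       else 0 : AuxR) := by
  rw [vmap, ZMod.val_cast_of_lt hn]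

include hc

lemma vmap_zero' : vmap c ((0 : ℕ) : ZMod c) = 1 := by
  rw [vmap_cast 0 (by omega)]; simp

lemma vmap_one' : vmap c ((1 : ℕ) : ZMod c) = ⟨0,1,0,0⟩ := by
  rw [vmap_cast 1 (by omega)]
  rw [if_neg (by omega), if_pos rfl]

lemma vmap_c2 : vmap c ((c - 2 : ℕ) : ZMod c) = ⟨0,0,1,0⟩ := by
  rw [vmap_cast _ (by omega)]
  rw [if_neg (by omega), if_neg (by omega), if_pos rfl]

lemma vmap_c1 : vmap c ((c - 1 : ℕ) : ZMod c) = ⟨0,0,0,1⟩ := by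
  rw [vmap_cast _ (by omega)]
  rw [if_neg (by omega), if_neg (by omega), if_neg (by omega), if_pos rfl]

lemma vmap_other (n : ℕ) (hn : n < c) (h0 : n ≠ 0) (h1 : n ≠ 1) (h2 : n ≠ c - 2)
    (h3 : n ≠ c - 1) : vmap c ((n : ℕ) : ZMod c) = 0 := by
  rw [vmap_cast n hn]
  rw [if_neg h0, if_neg h1, if_neg h2, if_neg h3]

/-- `aeval vmap` kills the binomial quadrics `q_i`, `i ≠ 0`. -/
lemma aeval_binQuadric_eq_zero (i : ZMod c) (hi : i ≠ 0) :
    aeval (vmap c) (binQuadric c i) = 0 := by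
  have hcv : i.val < c := ZMod.val_lt i
  set m := i.val with hm
  have hieq : i = ((m : ℕ) : ZMod c) := (ZMod.natCast_zmod_val i).symm
  have hm0 : m ≠ 0 := fun h => hi (by rwa [← ZMod.val_eq_zero])
  have key : ∀ a b : ℕ, a < c → b < c →
      i - 1 = ((a : ℕ) : ZMod c) → i - 3 = ((b : ℕ) : ZMod c) →
      vmap c i ^ 2 - vmap c ((a : ℕ) : ZMod c) * vmap c ((b : ℕ) : ZMod c) = 0 →
      aeval (vmap c) (binQuadric c i) = 0 := by
    intro a b _ _ ha hb hz
    rw [binQuadric, map_sub, map_pow, map_mul, aeval_X, aeval_X, aeval_X, ha, hb]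
    exact hz
  have h1eq : (1 : ZMod c) = ((1 : ℕ) : ZMod c) := by norm_cast
  have h3eq : (3 : ZMod c) = ((3 : ℕ) : ZMod c) := by norm_cast
  -- compute i - 1 and i - 3 as natural casts
  by_cases hm1 : m = 1
  · -- i = 1 : q₁ ↦ t² - 1·t² = 0
    apply key 0 (c - 2) (by omega) (by omega)
    · rw [hieq, hm1, h1eq, cast_sub_small 1 1 le_rfl]
    · rw [hieq, hm1, h3eq, cast_wrap 1 3 (by omega)]
      congr 1 <;> omega
    · rw [hieq, hm1, vmap_one' hc, vmap_zero' hc, vmap_c2 hc]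
      ext <;> simp <;> ring
  by_cases hm2 : m = 2
  · -- i = 2 : q₂ ↦ 0 - t·s = 0
    apply key 1 (c - 1) (by omega) (by omega)
    · rw [hieq, hm2, h1eq, cast_sub_small 2 1 (by omega)]
    · rw [hieq, hm2, h3eq, cast_wrap 2 3 (by omega)]
      congr 1 <;> omega
    · rw [hieq, hm2, vmap_other hc 2 (by omega) (by omega) (by omega) (by omega) (by omega),
        vmap_one' hc, vmap_c1 hc]
      ext <;> simp
  by_cases hmc2 : m = c - 2
  · -- i = c-2 : q_{c-2} ↦ t²·t² - 0 = 0
    apply key (c - 3) (c - 5) (by omega) (by omega)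
    · rw [hieq, hmc2, h1eq, cast_sub_small (c - 2) 1 (by omega)]
      congr 1 <;> omega
    · rw [hieq, hmc2, h3eq, cast_sub_small (c - 2) 3 (by omega)]
      congr 1 <;> omega
    · rw [hieq, hmc2, vmap_c2 hc,
        vmap_other hc (c - 3) (by omega) (by omega) (by omega) (by omega) (by omega)]
      ext <;> simp
  by_cases hmc1 : m = c - 1
  · -- i = c-1 : q_{c-1} ↦ s² - t²·0 = 0
    apply key (c - 2) (c - 4) (by omega) (by omega)
    · rw [hieq, hmc1, h1eq, cast_sub_small (c - 1) 1 (by omega)]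
      congr 1 <;> omega
    · rw [hieq, hmc1, h3eq, cast_sub_small (c - 1) 3 (by omega)]
      congr 1 <;> omega
    · rw [hieq, hmc1, vmap_c1 hc, vmap_c2 hc,
        vmap_other hc (c - 4) (by omega) (by omega) (by omega) (by omega) (by omega)]
      ext <;> simp
  -- generic case : vmap i = 0 and vmap (i-1) = 0
  · apply key (m - 1) (if 3 ≤ m then m - 3 else c + m - 3) (by omega) (by split <;> omega)
    · rw [hieq, h1eq, cast_sub_small m 1 (by omega)]
    · split
      · rw [hieq, h3eq, cast_sub_small m 3 (by omega)]
      · rw [hieq, h3eq, cast_wrap m 3 (by omega)]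
    · rw [hieq, vmap_other hc m (by omega) (by omega) (by omega) (by omega) (by omega),
        vmap_other hc (m - 1) (by omega) (by omega) (by omega) (by omega) (by omega)]
      ext <;> simp

/-- `aeval vmap` kills the distant monomials. -/
lemma aeval_monomial_eq_zero (i j : ZMod c) (hij : 3 ≤ (i - j).val) (hji : 3 ≤ (j - i).val) :
    aeval (vmap c) (X i * X j : MvPolynomial (ZMod c) ℚ) = 0 := by
  rw [map_mul, aeval_X, aeval_X]
  obtain ⟨m, hm⟩ : ∃ m, i.val = m := ⟨_, rfl⟩
  obtain ⟨n, hn⟩ : ∃ n, j.val = n := ⟨_, rfl⟩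
  have hmc : m < c := hm ▸ ZMod.val_lt i
  have hnc : n < c := hn ▸ ZMod.val_lt j
  have hieq : i = ((m : ℕ) : ZMod c) := by rw [← hm, ZMod.natCast_zmod_val]
  have hjeq : j = ((n : ℕ) : ZMod c) := by rw [← hn, ZMod.natCast_zmod_val]
  rw [sub_val_eq, hm, hn] at hij
  rw [sub_val_eq, hm, hn] at hji
  obtain ⟨hd1, hd2, hd3⟩ := dist_facts hmc hnc hij hji
  -- if either value maps to 0, done; otherwise both indices in {0,1,c-2,c-1}
  by_cases hm4 : m = 0 ∨ m = 1 ∨ m = c - 2 ∨ m = c - 1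
  · by_cases hn4 : n = 0 ∨ n = 1 ∨ n = c - 2 ∨ n = c - 1
    · -- both special: use distance facts to rule out all but (1, c-2) type pairs
      rcases hm4 with rfl | rfl | rfl | rfl <;> rcases hn4 with rfl | rfl | rfl | rfl <;>
        first
          | omega
          | (rw [hieq, hjeq, vmap_one' hc, vmap_c2 hc]; ext <;> simp)
          | (rw [hieq, hjeq, vmap_c2 hc, vmap_one' hc]; ext <;> simp)
    · push_neg at hn4
      rw [hjeq, vmap_other hc n hnc hn4.1 hn4.2.1 hn4.2.2.1 hn4.2.2.2, mul_zero]
  · push_neg at hm4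
    rw [hieq, vmap_other hc m hmc hm4.1 hm4.2.1 hm4.2.2.1 hm4.2.2.2, zero_mul]

end Ker
section Main

variable {c : ℕ} [NeZero c] (hc : 7 ≤ c)

lemma mem_mono (i j : ZMod c) (h1 : 3 ≤ (i - j).val) (h2 : 3 ≤ (j - i).val) :
    (X i * X j : MvPolynomial (ZMod c) ℚ) ∈ colonSourceIdeal c :=
  Ideal.subset_span (Or.inr ⟨i, j, h1, h2, rfl⟩)

lemma mem_quad (i : ZMod c) (hi : i ≠ 0) : binQuadric c i ∈ colonSourceIdeal c :=
  Ideal.subset_span (Or.inl ⟨i, hi, rfl⟩)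

include hc

lemma val3_le (m n : ℕ) (hm : m < c) (hn : n < c)
    (h1 : n ≤ m → 3 ≤ m - n) (h2 : m < n → 3 ≤ m + c - n) :
    3 ≤ (((m : ℕ) : ZMod c) - ((n : ℕ) : ZMod c)).val := by
  rw [val_cast_sub m n hm hn]
  rcases le_or_gt n m with h | h
  · rw [show m + c - n = c + (m - n) by omega, mod_helper _ (by omega)]
    exact h1 h
  · rw [Nat.mod_eq_of_lt (by omega)]
    exact h2 h

/-- The expansion of `q₀` with natural-cast indices. -/
lemma binQuadric_zero_eq :
    binQuadric c 0 = (X ((0 : ℕ) : ZMod c)) ^ 2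
      - X ((c - 1 : ℕ) : ZMod c) * X ((c - 3 : ℕ) : ZMod c) := by
  have h0c : (0 : ZMod c) = ((0 : ℕ) : ZMod c) := by norm_cast
  have h1c : (1 : ZMod c) = ((1 : ℕ) : ZMod c) := by norm_cast
  have h3c : (3 : ZMod c) = ((3 : ℕ) : ZMod c) := by norm_cast
  have e1 : (0 : ZMod c) - 1 = ((c - 1 : ℕ) : ZMod c) := by
    rw [h0c, h1c, cast_wrap 0 1 (by omega)]; congr 1 <;> omega
  have e3 : (0 : ZMod c) - 3 = ((c - 3 : ℕ) : ZMod c) := by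
    rw [h0c, h3c, cast_wrap 0 3 (by omega)]; congr 1 <;> omega
  rw [binQuadric, e1, e3, h0c]

/-- Core of the reverse direction: each allowed variable multiplies `q₀` into `L`. -/
lemma X_mul_q0_mem (n : ℕ) (h2 : 2 ≤ n) (h3 : n ≤ c - 3) :
    (X ((n : ℕ) : ZMod c) : MvPolynomial (ZMod c) ℚ) * binQuadric c 0
      ∈ colonSourceIdeal c := by
  have h1c : (1 : ZMod c) = ((1 : ℕ) : ZMod c) := by norm_cast
  have h3c : (3 : ZMod c) = ((3 : ℕ) : ZMod c) := by norm_cast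
  rw [binQuadric_zero_eq hc]
  by_cases hn2 : n = 2
  · subst hn2
    -- X 2 * q₀ = X 3 * (X 0 * X 3) - X 0 * q₃ - X (c-3) * (X 2 * X (c-1))
    have hq3 : binQuadric c ((3 : ℕ) : ZMod c)
        = (X ((3 : ℕ) : ZMod c)) ^ 2 - X ((2 : ℕ) : ZMod c) * X ((0 : ℕ) : ZMod c) := by
      have e1 : ((3 : ℕ) : ZMod c) - 1 = ((2 : ℕ) : ZMod c) := by
        rw [h1c, cast_sub_small 3 1 (by omega)]
      have e3 : ((3 : ℕ) : ZMod c) - 3 = ((0 : ℕ) : ZMod c) := by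
        rw [h3c, cast_sub_small 3 3 (by omega)]
      rw [binQuadric, e1, e3]
    have hid : (X ((2 : ℕ) : ZMod c) : MvPolynomial (ZMod c) ℚ) *
        ((X ((0 : ℕ) : ZMod c)) ^ 2 - X ((c - 1 : ℕ) : ZMod c) * X ((c - 3 : ℕ) : ZMod c))
        = X ((3 : ℕ) : ZMod c) * (X ((0 : ℕ) : ZMod c) * X ((3 : ℕ) : ZMod c))
          - X ((0 : ℕ) : ZMod c) * binQuadric c ((3 : ℕ) : ZMod c)
          - X ((c - 3 : ℕ) : ZMod c) * (X ((2 : ℕ) : ZMod c) * X ((c - 1 : ℕ) : ZMod c)) := by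
      rw [hq3]; ring
    rw [hid]
    refine sub_mem (sub_mem ?_ ?_) ?_
    · exact Ideal.mul_mem_left _ _ (mem_mono _ _
        (val3_le hc 0 3 (by omega) (by omega) (by omega) (by omega))
        (val3_le hc 3 0 (by omega) (by omega) (by omega) (by omega)))
    · exact Ideal.mul_mem_left _ _ (mem_quad _ (by
        rw [show (0 : ZMod c) = ((0 : ℕ) : ZMod c) by norm_cast]
        exact cast_ne_cast (by omega) (by omega) (by omega)))
    · exact Ideal.mul_mem_left _ _ (mem_mono _ _
        (val3_le hc 2 (c - 1) (by omega) (by omega) (by omega) (by omega))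
        (val3_le hc (c - 1) 2 (by omega) (by omega) (by omega) (by omega)))
  by_cases hnc3 : n = c - 3
  · subst hnc3
    -- X (c-3) * q₀ = X 0 * (X (c-3) * X 0) - X (c-1) * q_{c-3} - X (c-6) * (X (c-4) * X (c-1))
    have hqc3 : binQuadric c ((c - 3 : ℕ) : ZMod c)
        = (X ((c - 3 : ℕ) : ZMod c)) ^ 2
          - X ((c - 4 : ℕ) : ZMod c) * X ((c - 6 : ℕ) : ZMod c) := by
      have e1 : ((c - 3 : ℕ) : ZMod c) - 1 = ((c - 4 : ℕ) : ZMod c) := by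
        rw [h1c, cast_sub_small (c - 3) 1 (by omega)]; congr 1 <;> omega
      have e3 : ((c - 3 : ℕ) : ZMod c) - 3 = ((c - 6 : ℕ) : ZMod c) := by
        rw [h3c, cast_sub_small (c - 3) 3 (by omega)]; congr 1 <;> omega
      rw [binQuadric, e1, e3]
    have hid : (X ((c - 3 : ℕ) : ZMod c) : MvPolynomial (ZMod c) ℚ) *
        ((X ((0 : ℕ) : ZMod c)) ^ 2 - X ((c - 1 : ℕ) : ZMod c) * X ((c - 3 : ℕ) : ZMod c))
        = X ((0 : ℕ) : ZMod c) * (X ((c - 3 : ℕ) : ZMod c) * X ((0 : ℕ) : ZMod c))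
          - X ((c - 1 : ℕ) : ZMod c) * binQuadric c ((c - 3 : ℕ) : ZMod c)
          - X ((c - 6 : ℕ) : ZMod c) * (X ((c - 4 : ℕ) : ZMod c) * X ((c - 1 : ℕ) : ZMod c)) := by
      rw [hqc3]; ring
    rw [hid]
    refine sub_mem (sub_mem ?_ ?_) ?_
    · exact Ideal.mul_mem_left _ _ (mem_mono _ _
        (val3_le hc (c - 3) 0 (by omega) (by omega) (by omega) (by omega))
        (val3_le hc 0 (c - 3) (by omega) (by omega) (by omega) (by omega)))
    · exact Ideal.mul_mem_left _ _ (mem_quad _ (by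
        rw [show (0 : ZMod c) = ((0 : ℕ) : ZMod c) by norm_cast]
        exact cast_ne_cast (by omega) (by omega) (by omega)))
    · exact Ideal.mul_mem_left _ _ (mem_mono _ _
        (val3_le hc (c - 4) (c - 1) (by omega) (by omega) (by omega) (by omega))
        (val3_le hc (c - 1) (c - 4) (by omega) (by omega) (by omega) (by omega)))
  · -- 3 ≤ n ≤ c - 4
    have hid : (X ((n : ℕ) : ZMod c) : MvPolynomial (ZMod c) ℚ) *
        ((X ((0 : ℕ) : ZMod c)) ^ 2 - X ((c - 1 : ℕ) : ZMod c) * X ((c - 3 : ℕ) : ZMod c))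
        = X ((0 : ℕ) : ZMod c) * (X ((n : ℕ) : ZMod c) * X ((0 : ℕ) : ZMod c))
          - X ((c - 3 : ℕ) : ZMod c) * (X ((n : ℕ) : ZMod c) * X ((c - 1 : ℕ) : ZMod c)) := by
      ring
    rw [hid]
    refine sub_mem ?_ ?_
    · exact Ideal.mul_mem_left _ _ (mem_mono _ _
        (val3_le hc n 0 (by omega) (by omega) (by omega) (by omega))
        (val3_le hc 0 n (by omega) (by omega) (by omega) (by omega)))
    · exact Ideal.mul_mem_left _ _ (mem_mono _ _
        (val3_le hc n (c - 1) (by omega) (by omega) (by omega) (by omega))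
        (val3_le hc (c - 1) n (by omega) (by omega) (by omega) (by omega)))

end Main

/-- For `c ≥ 7` and a linear form `ℓ`, one has `ℓ·q_0 ∈ L` if and only if `ℓ` lies in
the `ℚ`-span of `x_2, x_3, …, x_{c−3}`; that is, `(L : q_0)₁ = (x_2, …, x_{c−3})₁`. -/
theorem colon_ideal_linear_part (c : ℕ) (hc : 7 ≤ c) [NeZero c]
    (ℓ : MvPolynomial (ZMod c) ℚ) (hl : ℓ ∈ homogeneousSubmodule (ZMod c) ℚ 1) :
    ℓ * binQuadric c 0 ∈ colonSourceIdeal c ↔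
      ℓ ∈ Submodule.span ℚ {p : MvPolynomial (ZMod c) ℚ |
        ∃ n : ℕ, 2 ≤ n ∧ n ≤ c - 3 ∧ p = X (n : ZMod c)} := by
  constructor
  · -- forward direction
    intro h
    -- the evaluation map kills the ideal
    have hker : ∀ p ∈ colonSourceIdeal c, aeval (vmap c) p = 0 := by
      intro p hp
      have hle : colonSourceIdeal c ≤ RingHom.ker (aeval (vmap c) :
          MvPolynomial (ZMod c) ℚ →ₐ[ℚ] AuxR).toRingHom := by
        rw [colonSourceIdeal, Ideal.span_le]
        rintro q hq
        simp only [Set.mem_union, Set.mem_setOf_eq] at hq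
        rcases hq with ⟨i, hi, rfl⟩ | ⟨i, j, h1, h2, rfl⟩
        · exact RingHom.mem_ker.2 (aeval_binQuadric_eq_zero hc i hi)
        · exact RingHom.mem_ker.2 (aeval_monomial_eq_zero hc i j h1 h2)
      exact RingHom.mem_ker.1 (hle hp)
    -- q₀ evaluates to 1
    have hq0 : aeval (vmap c) (binQuadric c 0) = 1 := by
      rw [binQuadric_zero_eq hc, map_sub, map_pow, map_mul, aeval_X, aeval_X, aeval_X,
        vmap_zero' hc, vmap_c1 hc,
        vmap_other hc (c - 3) (by omega) (by omega) (by omega) (by omega) (by omega)]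
      ext <;> simp
    have hl0 : aeval (vmap c) ℓ = 0 := by
      have := hker _ h
      rwa [map_mul, hq0, mul_one] at this
    -- decompose ℓ
    set a : ZMod c → ℚ := fun i => coeff (Finsupp.single i 1) ℓ with ha
    have hdecomp : ℓ = ∑ i : ZMod c, C (a i) * X i := homog_one_decomp ℓ hl
    -- evaluate the sum
    have hsum : aeval (vmap c) ℓ = ∑ i : ZMod c, algebraMap ℚ AuxR (a i) * vmap c i := by
      conv_lhs => rw [hdecomp]
      rw [map_sum]
      refine Finset.sum_congr rfl fun i _ => ?_
      rw [map_mul, aeval_C, aeval_X]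
    -- restrict to the four support indices
    have e0 : ((0 : ℕ) : ZMod c) = (0 : ZMod c) := by norm_cast
    set B : Finset (ZMod c) :=
      {((0 : ℕ) : ZMod c), ((1 : ℕ) : ZMod c), ((c - 2 : ℕ) : ZMod c), ((c - 1 : ℕ) : ZMod c)}
      with hB
    have hBsum : ∑ i : ZMod c, algebraMap ℚ AuxR (a i) * vmap c i
        = ∑ i ∈ B, algebraMap ℚ AuxR (a i) * vmap c i := by
      symm
      apply Finset.sum_subset (Finset.subset_univ B)
      intro i _ hiB
      have hiv : i = ((i.val : ℕ) : ZMod c) := (ZMod.natCast_zmod_val i).symm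
      simp only [hB, Finset.mem_insert, Finset.mem_singleton] at hiB
      push_neg at hiB
      have h0 : i.val ≠ 0 := fun hv => hiB.1 (by rw [hiv, hv])
      have h1 : i.val ≠ 1 := fun hv => hiB.2.1 (by rw [hiv, hv])
      have h2 : i.val ≠ c - 2 := fun hv => hiB.2.2.1 (by rw [hiv, hv])
      have h3 : i.val ≠ c - 1 := fun hv => hiB.2.2.2 (by rw [hiv, hv])
      rw [hiv, vmap_other hc i.val (ZMod.val_lt i) h0 h1 h2 h3, mul_zero]
    have hd01 : ((0 : ℕ) : ZMod c) ≠ ((1 : ℕ) : ZMod c) :=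
      cast_ne_cast (by omega) (by omega) (by omega)
    have hd02 : ((0 : ℕ) : ZMod c) ≠ ((c - 2 : ℕ) : ZMod c) :=
      cast_ne_cast (by omega) (by omega) (by omega)
    have hd03 : ((0 : ℕ) : ZMod c) ≠ ((c - 1 : ℕ) : ZMod c) :=
      cast_ne_cast (by omega) (by omega) (by omega)
    have hd12 : ((1 : ℕ) : ZMod c) ≠ ((c - 2 : ℕ) : ZMod c) :=
      cast_ne_cast (by omega) (by omega) (by omega)
    have hd13 : ((1 : ℕ) : ZMod c) ≠ ((c - 1 : ℕ) : ZMod c) :=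
      cast_ne_cast (by omega) (by omega) (by omega)
    have hd23 : ((c - 2 : ℕ) : ZMod c) ≠ ((c - 1 : ℕ) : ZMod c) :=
      cast_ne_cast (by omega) (by omega) (by omega)
    have hBval : ∑ i ∈ B, algebraMap ℚ AuxR (a i) * vmap c i
        = AuxR.mk (a ((0 : ℕ) : ZMod c)) (a ((1 : ℕ) : ZMod c))
            (a ((c - 2 : ℕ) : ZMod c)) (a ((c - 1 : ℕ) : ZMod c)) := by
      rw [hB]
      rw [Finset.sum_insert (by
          simp only [Finset.mem_insert, Finset.mem_singleton]
          push_neg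
          exact ⟨hd01, hd02, hd03⟩),
        Finset.sum_insert (by
          simp only [Finset.mem_insert, Finset.mem_singleton]
          push_neg
          exact ⟨hd12, hd13⟩),
        Finset.sum_insert (by
          simp only [Finset.mem_singleton]
          exact hd23), Finset.sum_singleton]
      rw [vmap_zero' hc, vmap_one' hc, vmap_c2 hc, vmap_c1 hc]
      ext <;> simp
    have hfinal : AuxR.mk (a ((0 : ℕ) : ZMod c)) (a ((1 : ℕ) : ZMod c))
        (a ((c - 2 : ℕ) : ZMod c)) (a ((c - 1 : ℕ) : ZMod c)) = 0 := by
      rw [← hBval, ← hBsum, ← hsum, hl0]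
    rw [AuxR.zero_def, AuxR.mk.injEq] at hfinal
    obtain ⟨hz0, hz1, hz2, hz3⟩ := hfinal
    -- conclude membership in the span
    rw [hdecomp]
    apply Submodule.sum_mem
    intro i _
    by_cases hi : i = ((0 : ℕ) : ZMod c) ∨ i = ((1 : ℕ) : ZMod c) ∨
        i = ((c - 2 : ℕ) : ZMod c) ∨ i = ((c - 1 : ℕ) : ZMod c)
    · have hzero : a i = 0 := by
        rcases hi with rfl | rfl | rfl | rfl <;> assumption
      rw [hzero]
      simp only [map_zero, zero_mul]
      exact Submodule.zero_mem _
    · push_neg at hi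
      have hiv : i = ((i.val : ℕ) : ZMod c) := (ZMod.natCast_zmod_val i).symm
      have h0 : i.val ≠ 0 := fun hv => hi.1 (by rw [hiv, hv])
      have h1 : i.val ≠ 1 := fun hv => hi.2.1 (by rw [hiv, hv])
      have h2 : i.val ≠ c - 2 := fun hv => hi.2.2.1 (by rw [hiv, hv])
      have h3 : i.val ≠ c - 1 := fun hv => hi.2.2.2 (by rw [hiv, hv])
      have hvc : i.val < c := ZMod.val_lt i
      rw [show C (a i) * X i = a i • (X i : MvPolynomial (ZMod c) ℚ) from
        (smul_eq_C_mul _ _).symm]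
      refine Submodule.smul_mem _ _ (Submodule.subset_span ?_)
      exact ⟨i.val, by omega, by omega, by rw [ZMod.natCast_zmod_val]⟩
  · -- reverse direction
    intro hs
    refine Submodule.span_induction ?_ ?_ ?_ ?_ hs
    · rintro p ⟨n, h2, h3, rfl⟩ 
      exact X_mul_q0_mem hc n h2 h3
    · rw [zero_mul]; exact Ideal.zero_mem _
    · intro p q _ _ hp hq
      rw [add_mul]; exact Ideal.add_mem _ hp hq
    · intro r p _ hp
      rw [smul_mul_assoc, smul_eq_C_mul]
      exact Ideal.mul_mem_left _ _ hp
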